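/- Let A be an n×n real symmetric matrix with spectral decomposition A = Σ_i ω_i φ_i φ_i^⊤, and suppose for each i ∈ B the vectors φ̃_i = Σ_{j∈B} γ_{ij} φ_j satisfy Σ_{i∈B} ω_i γ_{ij} γ_{ik} = 0 for j ≠ k. Then the reconstructed matrix Ã = A + Σ_{i∈B}[(Σ_{j∈B} ω_j γ_{ji}²) − ω_i]·φ_i φ_i^⊤ equals Σ_{i∉B} ω_i φ_i φ_i^⊤ + Σ_{i∈B} ω_i φ̃_i φ̃_i^⊤. -/
import Mathlib


open Matrix BigOperators

/-- For symmetric `A = ∑ i, ω i • φ i φ iᵀ` with `φ̃ i = ∑_{j∈B} γ i j • φ j`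
(`i ∈ B`) satisfying the vanishing cross-term condition, the Eq.(3) reconstruction
`Ã = A + ∑_{i∈B} ((∑_{j∈B} ω j γ j i ²) - ω i) • φ i φ iᵀ`
equals `∑_{i∉B} ω i • φ i φ iᵀ + ∑_{i∈B} ω i • φ̃ i φ̃ iᵀ`. -/
theorem eq3_reconstruction
    (n : ℕ) (A : Matrix (Fin n) (Fin n) ℝ) (hA : A.IsSymm)
    (ω : Fin n → ℝ) (φ : Fin n → (Fin n → ℝ))
    (horth : ∀ i j, φ i ⬝ᵥ φ j = if i = j then (1 : ℝ) else 0)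
    (hdec : A = ∑ i, ω i • vecMulVec (φ i) (φ i))
    (B : Finset (Fin n)) (γ : Fin n → Fin n → ℝ) (φt : Fin n → (Fin n → ℝ))
    (hφt : ∀ i ∈ B, φt i = ∑ j ∈ B, γ i j • φ j)
    (hcross : ∀ j ∈ B, ∀ k ∈ B, j ≠ k → ∑ i ∈ B, ω i * γ i j * γ i k = 0) :
    A + (∑ i ∈ B, ((∑ j ∈ B, ω j * γ j i ^ 2) - ω i) • vecMulVec (φ i) (φ i))
      = (∑ i ∈ Bᶜ, ω i • vecMulVec (φ i) (φ i))
        + ∑ i ∈ B, ω i • vecMulVec (φt i) (φt i) := by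
  ext a b
  simp only [Matrix.add_apply, Matrix.sum_apply, Matrix.smul_apply, vecMulVec_apply,
    smul_eq_mul, hdec]
  have key : ∑ i ∈ B, ω i * (φt i a * φt i b)
      = ∑ i ∈ B, (∑ j ∈ B, ω j * γ j i ^ 2) * (φ i a * φ i b) := by
    have h1 : ∀ i ∈ B, ω i * (φt i a * φt i b)
        = ∑ j ∈ B, ∑ k ∈ B, (ω i * γ i j * γ i k) * (φ j a * φ k b) := by
      intro i hi
      have ha : φt i a = ∑ j ∈ B, γ i j * φ j a := by
        rw [hφt i hi]; simp [Finset.sum_apply]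
      have hb : φt i b = ∑ k ∈ B, γ i k * φ k b := by
        rw [hφt i hi]; simp [Finset.sum_apply]
      rw [ha, hb, Finset.sum_mul_sum, Finset.mul_sum]
      refine Finset.sum_congr rfl fun j _ => ?_
      rw [Finset.mul_sum]
      exact Finset.sum_congr rfl fun k _ => by ring
    rw [Finset.sum_congr rfl h1, Finset.sum_comm]
    refine Finset.sum_congr rfl fun j hj => ?_
    rw [Finset.sum_comm]
    rw [Finset.sum_eq_single_of_mem j hj]
    · rw [← Finset.sum_mul]
      congr 1
      exact Finset.sum_congr rfl fun i _ => by ring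
    · intro k hk hkj
      rw [← Finset.sum_mul, hcross j hj k hk (Ne.symm hkj), zero_mul]
  rw [key, ← Finset.sum_compl_add_sum B fun i => ω i * (φ i a * φ i b), add_assoc,
    ← Finset.sum_add_distrib]
  congr 1
  exact Finset.sum_congr rfl fun i _ => by ring
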